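/- Let 1 ≤ m ≤ m' be integers and let {b₁,…,b_m, b_{m+1},…,b_{m'}} be a basis of ℝ^{m'} such that each of the vectors b_{m+1},…,b_{m'} has all coordinates in {0, 1, −1}. Fix a vector τ ∈ ℝ^{m'}. Then there exists a constant C > 0 depending only on m' such that for every integer N ≥ 1, the set { (a₁,…,a_m) ∈ ℝ^m : there exist a_{m+1},…,a_{m'} ∈ ℝ with τ + Σ_{i=1}^{m'} a_i·b_i ∈ {1,…,N}^{m'} } is finite with cardinality at most C·N^m. -/

import Mathlib

open scoped BigOperators

/-- The set `{1,…,N}^{m'} ⊆ ℝ^{m'}` of points all of whose coordinates are integers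
between `1` and `N`. -/
def latticeBox (k N : ℕ) : Set (Fin k → ℝ) :=
  {x | ∀ i, ∃ m : ℕ, 1 ≤ m ∧ m ≤ N ∧ x i = (m : ℝ)}

lemma myNcardAux {α β γ : Type*} (s : Set α) (hs : s.Finite)
    (g : α → β) (q : α → γ)
    (h : ∀ x ∈ s, ∀ y ∈ s, q x = q y → g x = g y) :
    (g '' s).ncard ≤ (q '' s).ncard := by
  classical
  rcases s.eq_empty_or_nonempty with rfl | ⟨x₀, hx₀⟩
  · simp
  have hne : Nonempty β := ⟨g x₀⟩
  set r : γ → β := fun c =>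
    if hc : ∃ x, x ∈ s ∧ q x = c then g hc.choose else Classical.arbitrary β with hr
  have hsub : g '' s ⊆ r '' (q '' s) := by
    rintro _ ⟨x, hx, rfl⟩
    refine ⟨q x, ⟨x, hx, rfl⟩, ?_⟩
    have hc : ∃ y, y ∈ s ∧ q y = q x := ⟨x, hx, rfl⟩
    rw [hr]
    simp only [hc, dif_pos]
    exact h _ hc.choose_spec.1 _ hx hc.choose_spec.2
  calc (g '' s).ncard ≤ (r '' (q '' s)).ncard :=
        Set.ncard_le_ncard hsub ((hs.image q).image r)
    _ ≤ (q '' s).ncard := Set.ncard_image_le (hs.image q)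

lemma myIntOfDenDvd (qq : ℚ) (d : ℕ) (hd : qq.den ∣ d) :
    ∃ k : ℤ, (k : ℚ) = qq * d := by
  obtain ⟨c, hc⟩ := hd
  refine ⟨qq.num * c, ?_⟩
  have hden : ((qq.den : ℚ)) ≠ 0 := by exact_mod_cast qq.den_nz
  have h1 : qq * qq.den = qq.num := by
    rw [eq_comm, ← div_eq_iff hden, Rat.num_div_den]
  rw [hc]
  push_cast
  rw [← mul_assoc, h1]

lemma myKey (m' m : ℕ) (hmm' : m ≤ m') (w : Fin m' → Fin m' → ℚ) :
    ∃ C : ℝ, 0 < C ∧ ∀ (b : Fin m' → (Fin m' → ℝ)),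
      LinearIndependent ℝ b →
      Submodule.span ℝ (Set.range b) = ⊤ →
      (∀ i : Fin m', m ≤ (i : ℕ) → ∀ j : Fin m', b i j = (w i j : ℝ)) →
      ∀ (τ : Fin m' → ℝ) (N : ℕ), 1 ≤ N →
        ({a : Fin m → ℝ | ∃ c : Fin m' → ℝ,
            (∀ i : Fin m, c (Fin.castLE hmm' i) = a i) ∧
            (τ + ∑ i : Fin m', c i • b i) ∈ latticeBox m' N}.Finite ∧
          ({a : Fin m → ℝ | ∃ c : Fin m' → ℝ,
            (∀ i : Fin m, c (Fin.castLE hmm' i) = a i) ∧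
            (τ + ∑ i : Fin m', c i • b i) ∈ latticeBox m' N}.ncard : ℝ)
            ≤ C * (N : ℝ) ^ m) := by
  classical
  by_cases hex : ∃ b : Fin m' → (Fin m' → ℝ),
      LinearIndependent ℝ b ∧ Submodule.span ℝ (Set.range b) = ⊤ ∧
      (∀ i : Fin m', m ≤ (i : ℕ) → ∀ j : Fin m', b i j = (w i j : ℝ))
  swap
  · exact ⟨1, one_pos, fun b hli hspan hw => absurd ⟨b, hli, hspan, hw⟩ hex⟩
  obtain ⟨b₀, hli₀, _, hw₀⟩ := hex
  set mm := m' - m with hmm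
  set e : Fin mm → Fin m' := fun k => ⟨m + (k : ℕ), by omega⟩ with he
  set w' : Fin mm → (Fin m' → ℚ) := fun k => w (e k) with hw'
  -- ℚ-linear independence of w'
  have hw'li : LinearIndependent ℚ w' := by
    rw [Fintype.linearIndependent_iff]
    intro g hg k
    set G : Fin m' → ℝ := fun i =>
      if h : m ≤ (i : ℕ) then (g ⟨(i : ℕ) - m, by omega⟩ : ℝ) else 0 with hG
    have hGe : ∀ k : Fin mm, G (e k) = (g k : ℝ) := by
      intro k
      have h1 : m ≤ ((e k) : ℕ) := by simp [he]
      have h2 : (⟨((e k) : ℕ) - m, by omega⟩ : Fin mm) = k := by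
        apply Fin.ext
        simp [he]
      rw [hG]
      simp only [dif_pos h1]
      exact congrArg (fun t => ((g t : ℚ) : ℝ)) h2
    have himgE : Finset.univ.image e = Finset.univ.filter (fun i : Fin m' => m ≤ (i : ℕ)) := by
      ext i
      simp only [Finset.mem_image, Finset.mem_filter, Finset.mem_univ, true_and]
      constructor
      · rintro ⟨k, rfl⟩
        simp [he]
      · intro hi
        have hilt : (i : ℕ) - m < mm := by omega
        refine ⟨⟨(i : ℕ) - m, hilt⟩, ?_⟩
        apply Fin.ext
        simp [he]
        omega
    have hGsum : ∑ i, G i • b₀ i = 0 := by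
      have h2 : ∑ i ∈ Finset.univ.filter (fun i : Fin m' => m ≤ (i : ℕ)), G i • b₀ i
          = ∑ i, G i • b₀ i := by
        apply Finset.sum_filter_of_ne
        intro i _ hne
        by_contra hc
        apply hne
        rw [hG]
        simp only [dif_neg hc, zero_smul]
      rw [← h2, ← himgE]
      rw [Finset.sum_image (fun x _ y _ hxy => by
        apply Fin.ext
        have := congrArg (fun t : Fin m' => (t : ℕ)) hxy
        simp only [he] at this
        omega)]
      funext j
      simp only [Finset.sum_apply, Pi.smul_apply, smul_eq_mul, Pi.zero_apply]
      have h4 : ∀ k : Fin mm, G (e k) * b₀ (e k) j = ((g k * w' k j : ℚ) : ℝ) := by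
        intro k
        rw [hGe k, hw₀ (e k) (by simp [he]) j]
        push_cast
        simp [hw']
      rw [Finset.sum_congr rfl fun k _ => h4 k]
      rw [← Rat.cast_sum]
      have h5 : ∑ k, g k * w' k j = 0 := by
        have := congrFun hg j
        simpa [Finset.sum_apply] using this
      rw [h5, Rat.cast_zero]
    have h6 := (Fintype.linearIndependent_iff.mp hli₀) G hGsum (e k)
    rw [hGe k] at h6
    exact_mod_cast h6
  set W : Submodule ℚ (Fin m' → ℚ) := Submodule.span ℚ (Set.range w') with hW
  have hfrW : Module.finrank ℚ W = mm := by
    rw [hW, finrank_span_eq_card hw'li, Fintype.card_fin]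
  have hfrQ : Module.finrank ℚ ((Fin m' → ℚ) ⧸ W) = m := by
    have h1 := Submodule.finrank_quotient_add_finrank W
    rw [hfrW, Module.finrank_pi, Fintype.card_fin] at h1
    omega
  set β : Module.Basis (Fin m) ℚ ((Fin m' → ℚ) ⧸ W) := Module.finBasisOfFinrankEq ℚ ((Fin m' → ℚ) ⧸ W) hfrQ with hβ
  set r : Fin m' → Fin m → ℚ :=
    fun i j => β.repr (W.mkQ (fun j' => if i = j' then 1 else 0)) j with hr
  set D : ℕ := ∏ i, ∏ j, (r i j).den with hD
  have hDpos : 0 < D :=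
    Finset.prod_pos fun i _ => Finset.prod_pos fun j _ => (r i j).pos
  have hdvd : ∀ i j, (r i j).den ∣ D := by
    intro i j
    rw [hD]
    have h1 : (r i j).den ∣ ∏ j', (r i j').den :=
      Finset.dvd_prod_of_mem (fun j' => (r i j').den) (Finset.mem_univ j)
    have h2 : (∏ j', (r i j').den) ∣ ∏ i', ∏ j', (r i' j').den :=
      Finset.dvd_prod_of_mem (fun i' => ∏ j', (r i' j').den) (Finset.mem_univ i)
    exact dvd_trans h1 h2
  have hex2 : ∀ i j, ∃ k : ℤ, (k : ℚ) = r i j * D := fun i j => myIntOfDenDvd _ _ (hdvd i j)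
  choose n hn using hex2
  set M : ℕ := 1 + ∑ i, ∑ j, (n i j).natAbs with hM
  have hMb : ∀ i j, (n i j).natAbs ≤ M := by
    intro i j
    have h1 : (n i j).natAbs ≤ ∑ j', (n i j').natAbs :=
      Finset.single_le_sum (f := fun j' => (n i j').natAbs)
        (fun _ _ => Nat.zero_le _) (Finset.mem_univ j)
    have h2 : ∑ j', (n i j').natAbs ≤ ∑ i', ∑ j', (n i' j').natAbs :=
      Finset.single_le_sum (f := fun i' => ∑ j', (n i' j').natAbs)
        (fun _ _ => Nat.zero_le _) (Finset.mem_univ i)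
    omega
  refine ⟨((2 * m' * M + 1 : ℕ) : ℝ) ^ m',
    pow_pos (by exact_mod_cast Nat.succ_pos _) m', ?_⟩
  intro b hli hspan hw τ N hN
  set B : Module.Basis (Fin m') ℝ (Fin m' → ℝ) := Module.Basis.mk hli hspan.ge with hB
  have hBb : ∀ i, B i = b i := fun i => by rw [hB, Module.Basis.mk_apply]
  set F : (Fin m' → ℝ) → (Fin m → ℝ) :=
    fun x i => B.repr (x - τ) (Fin.castLE hmm' i) with hF
  set boxI : Finset (Fin m' → ℤ) := Fintype.piFinset (fun _ => Finset.Icc (1 : ℤ) N) with hboxI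
  set E : (Fin m' → ℤ) → (Fin m' → ℝ) := fun x i => (x i : ℝ) with hE
  have hbox : latticeBox m' N = E '' ↑boxI := by
    ext x
    constructor
    · intro hx
      refine ⟨fun i => ((hx i).choose : ℤ), ?_, ?_⟩
      · have hmem : (fun i => (((hx i).choose : ℕ) : ℤ)) ∈ boxI := by
          rw [hboxI, Fintype.mem_piFinset]
          intro i
          obtain ⟨h1, h2, _⟩ := (hx i).choose_spec
          rw [Finset.mem_Icc]
          exact ⟨by exact_mod_cast h1, by exact_mod_cast h2⟩
        exact hmem
      · funext i
        obtain ⟨_, _, h3⟩ := (hx i).choose_spec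
        rw [hE]
        simp only
        exact_mod_cast h3.symm
    · rintro ⟨y, hy, rfl⟩
      intro i
      rw [Finset.mem_coe, hboxI, Fintype.mem_piFinset] at hy
      have hyi := hy i
      rw [Finset.mem_Icc] at hyi
      refine ⟨(y i).toNat, by omega, by omega, ?_⟩
      have h4 : ((y i).toNat : ℤ) = y i := Int.toNat_of_nonneg (by omega)
      rw [hE]
      simp only
      rw [← h4]
      push_cast
      rfl
  set A : Set (Fin m → ℝ) := {a : Fin m → ℝ | ∃ c : Fin m' → ℝ,
      (∀ i : Fin m, c (Fin.castLE hmm' i) = a i) ∧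
      (τ + ∑ i : Fin m', c i • b i) ∈ latticeBox m' N} with hA
  have hAeq : A = F '' latticeBox m' N := by
    ext a
    simp only [hA, Set.mem_setOf_eq, Set.mem_image]
    constructor
    · rintro ⟨c, hc, hx⟩
      refine ⟨τ + ∑ i, c i • b i, hx, ?_⟩
      funext i
      rw [hF]
      simp only [add_sub_cancel_left]
      have h7 : ∑ i2, c i2 • b i2 = ∑ i2, c i2 • B i2 :=
        Finset.sum_congr rfl fun i2 _ => by rw [hBb]
      rw [h7, B.repr_sum_self]
      exact hc i
    · rintro ⟨x, hx, rfl⟩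
      refine ⟨fun i => B.repr (x - τ) i, fun i => rfl, ?_⟩
      have h8 : ∑ i, B.repr (x - τ) i • b i = x - τ := by
        rw [Finset.sum_congr rfl fun i _ => by rw [← hBb i]]
        exact B.sum_repr (x - τ)
      rw [h8, add_sub_cancel]
      exact hx
  set qmap : (Fin m' → ℤ) → (Fin m → ℚ) :=
    fun x j => β.repr (W.mkQ (fun i => (x i : ℚ))) j with hqmap
  have hkey : ∀ x ∈ (boxI : Set (Fin m' → ℤ)), ∀ y ∈ (boxI : Set (Fin m' → ℤ)),
      qmap x = qmap y → (fun z => F (E z)) x = (fun z => F (E z)) y := by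
    intro x _ y _ hq
    have h1 : W.mkQ (fun i => (x i : ℚ)) = W.mkQ (fun i => (y i : ℚ)) := by
      apply β.repr.injective
      apply Finsupp.ext
      intro j
      exact congrFun hq j
    have h2 : (fun i => (x i : ℚ)) - (fun i => (y i : ℚ)) ∈ W := by
      rwa [Submodule.mkQ_apply, Submodule.mkQ_apply, Submodule.Quotient.eq] at h1
    have h3 : ∀ u : Fin m' → ℚ, u ∈ W →
        (fun i => ((u i : ℝ))) ∈ Submodule.span ℝ (b '' {i : Fin m' | m ≤ (i : ℕ)}) := by
      intro u hu
      rw [hW] at hu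
      induction hu using Submodule.span_induction with
      | mem v hv =>
        obtain ⟨k, rfl⟩ := hv
        apply Submodule.subset_span
        refine ⟨e k, by simp [he], ?_⟩
        funext j
        rw [hw (e k) (by simp [he]) j]
      | zero =>
        simp only [Pi.zero_apply, Rat.cast_zero]
        exact Submodule.zero_mem _
      | add u v _ _ hu hv =>
        have heq : (fun i => (((u + v) i : ℚ) : ℝ))
            = (fun i => ((u i : ℚ) : ℝ)) + (fun i => ((v i : ℚ) : ℝ)) := by
          funext i
          simp [Pi.add_apply]
        rw [heq]
        exact Submodule.add_mem _ hu hv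
      | smul q u _ hu =>
        have heq : (fun i => (((q • u) i : ℚ) : ℝ)) = (q : ℝ) • (fun i => ((u i : ℚ) : ℝ)) := by
          funext i
          simp [Pi.smul_apply, smul_eq_mul]
        rw [heq]
        exact Submodule.smul_mem _ _ hu
    have h4 := h3 _ h2
    have hbB : b '' {i : Fin m' | m ≤ (i : ℕ)} = ⇑B '' {i : Fin m' | m ≤ (i : ℕ)} :=
      Set.image_congr fun i _ => (hBb i).symm
    have hfe : E x - E y = (fun i =>
        ((((fun i2 => ((x i2 : ℚ))) - (fun i2 => ((y i2 : ℚ)))) i : ℚ) : ℝ)) := by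
      funext i
      rw [hE]
      simp only [Pi.sub_apply]
      push_cast
      rfl
    have h5 : E x - E y ∈ Submodule.span ℝ (⇑B '' {i : Fin m' | m ≤ (i : ℕ)}) := by
      rw [hfe, ← hbB]
      exact h4
    have h6 := B.repr_support_subset_of_mem_span _ h5
    funext i
    simp only
    rw [hF]
    simp only
    have h8 : B.repr (E x - E y) (Fin.castLE hmm' i) = 0 := by
      by_contra hc
      have hmem : (Fin.castLE hmm' i) ∈ {i : Fin m' | m ≤ (i : ℕ)} :=
        h6 (Finsupp.mem_support_iff.mpr hc)
      simp only [Set.mem_setOf_eq, Fin.coe_castLE] at hmem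
      omega
    have h7'' : (E x - τ) - (E y - τ) = E x - E y := by abel
    have h9 : B.repr (E x - τ) (Fin.castLE hmm' i) - B.repr (E y - τ) (Fin.castLE hmm' i) = 0 := by
      rw [← Finsupp.sub_apply, ← map_sub, h7'', h8]
    linarith
  set T : Finset ℚ :=
    Finset.image (fun k : ℤ => (k : ℚ) / (D : ℚ))
      (Finset.Icc (-(m' * M * N : ℤ)) ((m' * M * N : ℤ))) with hT
  have himg : qmap '' ↑boxI ⊆ ↑(Fintype.piFinset fun _ : Fin m => T) := by
    rintro _ ⟨x, hx, rfl⟩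
    rw [Finset.mem_coe, Fintype.mem_piFinset]
    intro j
    have hq1 : qmap x j = ∑ i, (x i : ℚ) * r i j := by
      simp only [hqmap, hr]
      conv_lhs => rw [pi_eq_sum_univ (fun i => ((x i : ℤ) : ℚ))]
      rw [map_sum, map_sum]
      simp only [map_smul]
      rw [Finset.sum_apply']
      simp only [Finsupp.smul_apply, smul_eq_mul]
    have hq2 : ((∑ i, x i * n i j : ℤ) : ℚ) = qmap x j * D := by
      push_cast
      rw [hq1, Finset.sum_mul]
      apply Finset.sum_congr rfl
      intro i _
      rw [mul_assoc, ← hn i j]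
    set k : ℤ := ∑ i, x i * n i j with hk
    have hq3 : qmap x j = (k : ℚ) / D := by
      rw [eq_div_iff (by exact_mod_cast hDpos.ne')]
      rw [← hq2]
    have hkb : |k| ≤ (m' : ℤ) * M * N := by
      rw [hk]
      calc |∑ i, x i * n i j| ≤ ∑ i, |x i * n i j| := Finset.abs_sum_le_sum_abs _ _
        _ ≤ ∑ _i : Fin m', (N : ℤ) * M := by
            apply Finset.sum_le_sum
            intro i _
            rw [abs_mul]
            have hxi : x i ∈ Finset.Icc (1 : ℤ) (N : ℤ) := by
              rw [Finset.mem_coe, hboxI, Fintype.mem_piFinset] at hx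
              exact hx i
            rw [Finset.mem_Icc] at hxi
            have hx1 : |x i| ≤ (N : ℤ) := by rw [abs_le]; omega
            have hx2 : |n i j| ≤ (M : ℤ) := by
              rw [Int.abs_eq_natAbs]
              exact_mod_cast hMb i j
            exact mul_le_mul hx1 hx2 (abs_nonneg _) (by positivity)
        _ = (m' : ℤ) * M * N := by
            rw [Finset.sum_const, Finset.card_univ, Fintype.card_fin]
            ring
    rw [hT, Finset.mem_image]
    refine ⟨k, ?_, hq3.symm⟩
    rw [Finset.mem_Icc]
    have hk1 := neg_abs_le k
    have hk2 := le_abs_self k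
    constructor
    · linarith
    · linarith
  constructor
  · rw [hAeq, hbox]
    exact (boxI.finite_toSet.image E).image F
  · have hc1 : A.ncard ≤ (qmap '' ↑boxI).ncard := by
      rw [hAeq, hbox, ← Set.image_comp]
      exact myNcardAux _ boxI.finite_toSet _ qmap hkey
    have hc2 : (qmap '' ↑boxI).ncard ≤ (Fintype.piFinset fun _ : Fin m => T).card := by
      rw [← Set.ncard_coe_finset]
      exact Set.ncard_le_ncard himg (Finset.finite_toSet _)
    have hc3 : (Fintype.piFinset fun _ : Fin m => T).card = T.card ^ m := by
      rw [Fintype.card_piFinset]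
      simp [Finset.prod_const]
    have hc4 : T.card ≤ 2 * (m' * M * N) + 1 := by
      rw [hT]
      refine le_trans Finset.card_image_le ?_
      have ha : ((m' : ℤ) * (M : ℤ) * (N : ℤ)) = ((m' * M * N : ℕ) : ℤ) := by push_cast; ring
      rw [Int.card_Icc, ha]
      omega
    have hc5 : A.ncard ≤ (2 * m' * M + 1) ^ m' * N ^ m := by
      have s1 : A.ncard ≤ T.card ^ m := le_trans hc1 (le_of_le_of_eq hc2 hc3)
      have s2 : T.card ^ m ≤ (2 * (m' * M * N) + 1) ^ m := Nat.pow_le_pow_left hc4 m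
      have s3 : (2 * (m' * M * N) + 1) ^ m ≤ ((2 * m' * M + 1) * N) ^ m := by
        apply Nat.pow_le_pow_left
        have : (2 * m' * M + 1) * N = 2 * (m' * M * N) + N := by ring
        rw [this]
        omega
      have s4 : ((2 * m' * M + 1) * N) ^ m = (2 * m' * M + 1) ^ m * N ^ m := mul_pow _ _ m
      have s5 : (2 * m' * M + 1) ^ m * N ^ m ≤ (2 * m' * M + 1) ^ m' * N ^ m :=
        Nat.mul_le_mul_right _ (Nat.pow_le_pow_right (by omega) hmm')
      omega
    calc (A.ncard : ℝ) ≤ (((2 * m' * M + 1) ^ m' * N ^ m : ℕ) : ℝ) := by exact_mod_cast hc5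
      _ = ((2 * m' * M + 1 : ℕ) : ℝ) ^ m' * (N : ℝ) ^ m := by push_cast; ring

noncomputable def myDec : Fin 3 → ℚ := ![0, 1, -1]

noncomputable def myCfor (m' : ℕ) (p : Fin (m' + 1) × (Fin m' → Fin m' → Fin 3)) : ℝ :=
  (myKey m' (p.1 : ℕ) (Nat.lt_succ_iff.mp p.1.isLt) (fun i j => myDec (p.2 i j))).choose

lemma myCfor_spec (m' : ℕ) (p : Fin (m' + 1) × (Fin m' → Fin m' → Fin 3)) :
    0 < myCfor m' p ∧ ∀ (b : Fin m' → (Fin m' → ℝ)),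
      LinearIndependent ℝ b →
      Submodule.span ℝ (Set.range b) = ⊤ →
      (∀ i : Fin m', (p.1 : ℕ) ≤ (i : ℕ) → ∀ j : Fin m', b i j = (myDec (p.2 i j) : ℝ)) →
      ∀ (τ : Fin m' → ℝ) (N : ℕ), 1 ≤ N →
        ({a : Fin (p.1 : ℕ) → ℝ | ∃ c : Fin m' → ℝ,
            (∀ i : Fin (p.1 : ℕ), c (Fin.castLE (Nat.lt_succ_iff.mp p.1.isLt) i) = a i) ∧
            (τ + ∑ i : Fin m', c i • b i) ∈ latticeBox m' N}.Finite ∧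
          ({a : Fin (p.1 : ℕ) → ℝ | ∃ c : Fin m' → ℝ,
            (∀ i : Fin (p.1 : ℕ), c (Fin.castLE (Nat.lt_succ_iff.mp p.1.isLt) i) = a i) ∧
            (τ + ∑ i : Fin m', c i • b i) ∈ latticeBox m' N}.ncard : ℝ)
            ≤ myCfor m' p * (N : ℝ) ^ (p.1 : ℕ)) :=
  (myKey m' (p.1 : ℕ) (Nat.lt_succ_iff.mp p.1.isLt) (fun i j => myDec (p.2 i j))).choose_spec

theorem statement15 (m' : ℕ) (hm' : 1 ≤ m') :
    ∃ C : ℝ, 0 < C ∧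
      ∀ (m : ℕ) (hm1 : 1 ≤ m) (hmm' : m ≤ m')
        (b : Fin m' → (Fin m' → ℝ)),
        LinearIndependent ℝ b →
        Submodule.span ℝ (Set.range b) = ⊤ →
        (∀ i : Fin m', m ≤ (i : ℕ) → ∀ j : Fin m',
          b i j = 0 ∨ b i j = 1 ∨ b i j = -1) →
        ∀ (τ : Fin m' → ℝ) (N : ℕ), 1 ≤ N →
          ({a : Fin m → ℝ | ∃ c : Fin m' → ℝ,
              (∀ i : Fin m, c (Fin.castLE hmm' i) = a i) ∧
              (τ + ∑ i : Fin m', c i • b i) ∈ latticeBox m' N}.Finite ∧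
            ({a : Fin m → ℝ | ∃ c : Fin m' → ℝ,
              (∀ i : Fin m, c (Fin.castLE hmm' i) = a i) ∧
              (τ + ∑ i : Fin m', c i • b i) ∈ latticeBox m' N}.ncard : ℝ)
              ≤ C * (N : ℝ) ^ m) := by
  classical
  have hne : (Finset.univ : Finset (Fin (m' + 1) × (Fin m' → Fin m' → Fin 3))).Nonempty :=
    Finset.univ_nonempty
  refine ⟨Finset.univ.sup' hne (myCfor m'), ?_, ?_⟩
  · exact lt_of_lt_of_le (myCfor_spec m' (0, fun _ _ => 0)).1
      (Finset.le_sup' _ (Finset.mem_univ _))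
  · intro m hm1 hmm' b hli hspan hb01 τ N hN
    set p : Fin (m' + 1) × (Fin m' → Fin m' → Fin 3) :=
      (⟨m, by omega⟩, fun i j => if b i j = 0 then 0 else if b i j = 1 then 1 else 2) with hp
    have hw : ∀ i : Fin m', (p.1 : ℕ) ≤ (i : ℕ) → ∀ j : Fin m',
        b i j = (myDec (p.2 i j) : ℝ) := by
      intro i hi j
      rcases hb01 i hi j with h | h | h
      · simp [hp, myDec, h]
      · simp [hp, myDec, h]
      · have h0 : b i j ≠ 0 := by rw [h]; norm_num
        have h1 : b i j ≠ 1 := by rw [h]; norm_num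
        rw [hp]
        simp only [if_neg h0, if_neg h1, myDec]
        rw [h]
        norm_num
        simp [Matrix.cons_val_two]
    have hspec := (myCfor_spec m' p).2 b hli hspan hw τ N hN
    refine ⟨hspec.1, le_trans hspec.2 ?_⟩
    exact mul_le_mul_of_nonneg_right (Finset.le_sup' _ (Finset.mem_univ p))
      (pow_nonneg (Nat.cast_nonneg N) m)
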